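/- Let V and H be real inner product spaces and D : V → H a linear map. Let f, f_h, Q and f̃_h be linear functionals on V. Assume u ∈ V satisfies ⟨D u, D w⟩ = f(w) for all w ∈ V, ũ ∈ V satisfies ⟨D ũ, D w⟩ = Q(w) for all w ∈ V, σ ∈ H satisfies ⟨σ, D w⟩ = f_h(w) for all w ∈ V, and σ̃ ∈ H satisfies ⟨σ̃, D w⟩ = f̃_h(w) for all w ∈ V. For s, s̃ ∈ V set σ̃ᵐ = (1/2)(σ̃ + D s̃), osc_dual = |(Q − f̃_h)(ũ − s̃)|^{1/2} and osc_prim² = |(f − f_h)(ũ − s̃)|. Then | Q(u) − Q(s) − ⟨σ − D s, σ̃ᵐ⟩ | ≤ ‖D s − σ‖ ( (1/2) ‖D s̃ − σ̃‖ + osc_dual ) + | (f − f_h)(s̃) | + osc_prim². -/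

import Mathlib

open RealInnerProductSpace

/-- Abstract goal-oriented a posteriori estimator (Theorem 4.3, form (4.13)). -/
theorem abstract_goal_estimator_simplified
    {V H : Type*} [NormedAddCommGroup V] [InnerProductSpace ℝ V]
    [NormedAddCommGroup H] [InnerProductSpace ℝ H]
    (D : V →ₗ[ℝ] H) (f fh Q ftildeh : V →ₗ[ℝ] ℝ)
    (u utilde : V) (σ σtilde : H)
    (hu : ∀ w : V, ⟪D u, D w⟫ = f w)
    (hutilde : ∀ w : V, ⟪D utilde, D w⟫ = Q w)
    (hσ : ∀ w : V, ⟪σ, D w⟫ = fh w)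
    (hσtilde : ∀ w : V, ⟪σtilde, D w⟫ = ftildeh w)
    (s stilde : V) :
    |Q u - Q s - ⟪σ - D s, (1 / 2 : ℝ) • (σtilde + D stilde)⟫| ≤
      ‖D s - σ‖ * ((1 / 2 : ℝ) * ‖D stilde - σtilde‖
          + Real.sqrt |(Q - ftildeh) (utilde - stilde)|)
        + |(f - fh) stilde| + |(f - fh) (utilde - stilde)| := by
  set X : H := D utilde - (1 / 2 : ℝ) • (σtilde + D stilde) with hXdef
  -- rewrite all functional applications as inner products
  have hQu : Q u = ⟪D utilde, D u⟫ := (hutilde u).symm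
  have hQs : Q s = ⟪D utilde, D s⟫ := (hutilde s).symm
  have hfs : f stilde = ⟪D u, D stilde⟫ := (hu stilde).symm
  have hfhs : fh stilde = ⟪σ, D stilde⟫ := (hσ stilde).symm
  have hfe : f (utilde - stilde) = ⟪D u, D utilde - D stilde⟫ := by
    rw [← map_sub]; exact (hu _).symm
  have hfhe : fh (utilde - stilde) = ⟪σ, D utilde - D stilde⟫ := by
    rw [← map_sub]; exact (hσ _).symm
  have hQe : Q (utilde - stilde) = ⟪D utilde, D utilde - D stilde⟫ := by
    rw [← map_sub]; exact (hutilde _).symm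
  have hfte : ftildeh (utilde - stilde) = ⟪σtilde, D utilde - D stilde⟫ := by
    rw [← map_sub]; exact (hσtilde _).symm
  -- key exact identity
  have key : Q u - Q s - ⟪σ - D s, (1 / 2 : ℝ) • (σtilde + D stilde)⟫
      = (f - fh) stilde + (f - fh) (utilde - stilde) + ⟪σ - D s, X⟫ := by
    simp only [LinearMap.sub_apply, hQu, hQs, hfs, hfe, hfhs, hfhe, hXdef]
    simp only [inner_sub_left, inner_sub_right, inner_add_left, inner_add_right,
      inner_smul_left, inner_smul_right, RCLike.ofReal_real_eq_id, id_eq]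
    rw [real_inner_comm (D utilde) (D u), real_inner_comm (D utilde) (D s)]
    ring
  -- norm identity for X
  have hX2 : ‖X‖ ^ 2 = (1 / 4 : ℝ) * ‖D stilde - σtilde‖ ^ 2
      + (Q - ftildeh) (utilde - stilde) := by
    simp only [LinearMap.sub_apply, hQe, hfte, hXdef]
    simp only [← real_inner_self_eq_norm_sq]
    simp only [inner_sub_left, inner_sub_right, inner_add_left, inner_add_right,
      inner_smul_left, inner_smul_right, RCLike.ofReal_real_eq_id, id_eq,
      conj_trivial]
    rw [real_inner_comm (D stilde) σtilde, real_inner_comm (D utilde) σtilde,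
      real_inner_comm (D utilde) (D stilde)]
    ring
  set c : ℝ := (Q - ftildeh) (utilde - stilde) with hc
  set b : ℝ := (1 / 2 : ℝ) * ‖D stilde - σtilde‖ + Real.sqrt |c| with hb
  have hbnn : 0 ≤ b := by
    apply add_nonneg
    · positivity
    · exact Real.sqrt_nonneg _
  have hXb : ‖X‖ ≤ b := by
    have hsq : ‖X‖ ^ 2 ≤ b ^ 2 := by
      have h1 : ‖X‖ ^ 2 ≤ (1 / 4 : ℝ) * ‖D stilde - σtilde‖ ^ 2 + |c| := by
        rw [hX2]; exact add_le_add_right (le_abs_self c) _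
      have h2 : Real.sqrt |c| ^ 2 = |c| := Real.sq_sqrt (abs_nonneg c)
      have h3 : (0:ℝ) ≤ 2 * ((1 / 2 : ℝ) * ‖D stilde - σtilde‖) * Real.sqrt |c| := by
        positivity
      rw [hb]
      nlinarith [h1, h2, h3]
    calc ‖X‖ = Real.sqrt (‖X‖ ^ 2) := (Real.sqrt_sq (norm_nonneg _)).symm
      _ ≤ Real.sqrt (b ^ 2) := Real.sqrt_le_sqrt hsq
      _ = b := Real.sqrt_sq hbnn
  -- final estimate
  rw [key]
  have hinner : |⟪σ - D s, X⟫| ≤ ‖D s - σ‖ * b := by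
    calc |⟪σ - D s, X⟫| ≤ ‖σ - D s‖ * ‖X‖ := abs_real_inner_le_norm _ _
      _ = ‖D s - σ‖ * ‖X‖ := by rw [norm_sub_rev]
      _ ≤ ‖D s - σ‖ * b := by
          exact mul_le_mul_of_nonneg_left hXb (norm_nonneg _)
  calc |(f - fh) stilde + (f - fh) (utilde - stilde) + ⟪σ - D s, X⟫|
      ≤ |(f - fh) stilde + (f - fh) (utilde - stilde)| + |⟪σ - D s, X⟫| :=
        abs_add_le _ _
    _ ≤ |(f - fh) stilde| + |(f - fh) (utilde - stilde)| + ‖D s - σ‖ * b :=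
        add_le_add (abs_add_le _ _) hinner
    _ = ‖D s - σ‖ * b + |(f - fh) stilde| + |(f - fh) (utilde - stilde)| := by ring
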